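/- Let $A$ be a real symmetric $n \times n$ matrix and let $B$ be a real positive semidefinite symmetric $n \times n$ matrix with $B_{ii} = 1$ for all $i$. Then every eigenvalue of the Hadamard (entrywise) product $A \circ B$ lies in the interval $[\lambda_{\min}(A), \lambda_{\max}(A)]$. More precisely, each eigenvalue of $A \circ B$ is a convex combination of the eigenvalues of $A$. -/

import Mathlib

open Matrix

/-- Each eigenvalue of the Hadamard product `A ∘ B`, with `A` real symmetric and `B`
positive semidefinite with unit diagonal, is a convex combination of the eigenvalues of `A`;
in particular it lies in `[λmin A, λmax A]`. -/
theorem hadamard_eigenvalues_convex {n : Type*} [Fintype n] [DecidableEq n]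
    (A B : Matrix n n ℝ) (hA : A.IsHermitian) (hB : B.PosSemidef)
    (hBdiag : ∀ i, B i i = 1) (hAB : (Matrix.hadamard A B).IsHermitian) :
    ∀ i,
      (∃ w : n → ℝ, (∀ j, 0 ≤ w j) ∧ ∑ j, w j = 1 ∧
          hAB.eigenvalues i = ∑ j, w j * hA.eigenvalues j) ∧
        hAB.eigenvalues i ∈ Set.Icc (⨅ j, hA.eigenvalues j) (⨆ j, hA.eigenvalues j) := by
  intro i
  classical
  have hn : Nonempty n := ⟨i⟩
  set μ : ℝ := hAB.eigenvalues i with hμ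
  set v : n → ℝ := ⇑(hAB.eigenvectorBasis i) with hv
  set u : n → n → ℝ := fun j => ⇑(hA.eigenvectorBasis j) with hu
  set lam : n → ℝ := hA.eigenvalues with hlam
  -- entrywise spectral decomposition of A
  have hAentry : ∀ k l, A k l = ∑ j, lam j * u j k * u j l := by
    intro k l
    nth_rewrite 1 [hA.spectral_theorem]
    simp only [Matrix.mul_apply, Matrix.mul_diagonal, Matrix.star_apply,
      IsHermitian.eigenvectorUnitary_apply, Matrix.diagonal_apply, ite_mul, zero_mul, mul_ite,
      mul_zero, Finset.sum_ite_eq', Finset.sum_ite_eq, Finset.mem_univ, if_true,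
      Function.comp, RCLike.ofReal_real_eq_id, id_eq, star_trivial, Unitary.conjStarAlgAut_apply]
    apply Finset.sum_congr rfl
    intro j _
    simp only [hu]
    ring
  -- orthonormality of eigenvectors of A
  have hUnit : ∀ k l, ∑ j, u j k * u j l = if k = l then 1 else 0 := by
    intro k l
    have h := (Matrix.mem_unitaryGroup_iff).mp (hA.eigenvectorUnitary).2
    have h2 := congrFun (congrFun h k) l
    simpa only [Matrix.mul_apply, Matrix.star_apply, IsHermitian.eigenvectorUnitary_apply,
      star_trivial, Matrix.one_apply] using h2
  -- the eigenvector v is normalized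
  have hvnorm : ∑ k, v k * v k = 1 := by
    have h := hAB.eigenvectorBasis.orthonormal
    rw [orthonormal_iff_ite] at h
    have h2 := h i i
    simpa only [PiLp.inner_apply, if_true, RCLike.inner_apply, conj_trivial, hv, mul_comm] using h2
  -- eigenvector equation
  have hvec : ∀ k, ∑ l, Matrix.hadamard A B k l * v l = μ * v k := by
    intro k
    have h := congrFun (hAB.mulVec_eigenvectorBasis i) k
    simpa [Matrix.mulVec, dotProduct, mul_comm] using h
  -- the weights
  set w : n → ℝ := fun j => ∑ k, ∑ l, (v k * u j k) * B k l * (v l * u j l) with hw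
  have hw0 : ∀ j, 0 ≤ w j := by
    intro j
    have h := hB.dotProduct_mulVec_nonneg (fun k => v k * u j k)
    have he : (star fun k => v k * u j k) ⬝ᵥ (B *ᵥ fun k => v k * u j k) = w j := by
      simp only [dotProduct, Matrix.mulVec, star_trivial, Pi.star_apply, hw,
        dotProduct, Finset.mul_sum]
      apply Finset.sum_congr rfl
      intro k _
      apply Finset.sum_congr rfl
      intro l _
      ring
    rw [he] at h
    simpa using h
  -- the weights sum to 1
  have hwsum : ∑ j, w j = 1 := by
    have step1 : ∑ j, w j = ∑ k, ∑ l, (v k * v l * B k l) * (∑ j, u j k * u j l) := by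
      simp_rw [hw, Finset.mul_sum]
      rw [Finset.sum_comm]
      apply Finset.sum_congr rfl
      intro k _
      rw [Finset.sum_comm]
      apply Finset.sum_congr rfl
      intro l _
      apply Finset.sum_congr rfl
      intro j _
      ring
    rw [step1]
    have hcol : ∀ k, ∑ l, (v k * v l * B k l) * (∑ j, u j k * u j l) = v k * v k := by
      intro k
      rw [Finset.sum_eq_single k]
      · rw [hUnit]
        simp [hBdiag]
      · intro l _ hlk
        rw [hUnit]
        simp [Ne.symm hlk]
      · simp
    simp_rw [hcol]
    exact hvnorm
  -- the eigenvalue is the convex combination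
  have hμeq : μ = ∑ j, w j * lam j := by
    have step1 : ∑ j, w j * lam j = ∑ k, ∑ l, (v k * v l * B k l) * A k l := by
      simp_rw [hAentry, Finset.mul_sum, hw, Finset.sum_mul]
      rw [Finset.sum_comm]
      apply Finset.sum_congr rfl
      intro k _
      rw [Finset.sum_comm]
      apply Finset.sum_congr rfl
      intro l _
      apply Finset.sum_congr rfl
      intro j _
      ring
    have step2 : ∑ k, ∑ l, (v k * v l * B k l) * A k l = ∑ k, v k * (μ * v k) := by
      apply Finset.sum_congr rfl
      intro k _
      rw [← hvec k, Finset.mul_sum]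
      apply Finset.sum_congr rfl
      intro l _
      simp only [Matrix.hadamard_apply]
      ring
    have step3 : ∑ k, v k * (μ * v k) = μ := by
      have : ∑ k, v k * (μ * v k) = μ * ∑ k, v k * v k := by
        rw [Finset.mul_sum]
        apply Finset.sum_congr rfl
        intro k _
        ring
      rw [this, hvnorm, mul_one]
    rw [step1, step2, step3]
  refine ⟨⟨w, hw0, hwsum, hμeq⟩, ?_, ?_⟩
  · have hle : ∀ j, (⨅ j, lam j) ≤ lam j := fun j =>
      ciInf_le (Set.Finite.bddBelow (Set.finite_range _)) j
    calc (⨅ j, lam j) = ∑ j, w j * (⨅ j, lam j) := by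
          rw [← Finset.sum_mul, hwsum, one_mul]
      _ ≤ ∑ j, w j * lam j :=
          Finset.sum_le_sum fun j _ => mul_le_mul_of_nonneg_left (hle j) (hw0 j)
      _ = μ := hμeq.symm
  · have hge : ∀ j, lam j ≤ ⨆ j, lam j := fun j =>
      le_ciSup (Set.Finite.bddAbove (Set.finite_range _)) j
    calc μ = ∑ j, w j * lam j := hμeq
      _ ≤ ∑ j, w j * (⨆ j, lam j) :=
          Finset.sum_le_sum fun j _ => mul_le_mul_of_nonneg_left (hge j) (hw0 j)
      _ = ⨆ j, lam j := by rw [← Finset.sum_mul, hwsum, one_mul]
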